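/- Let M be an A-module of length 4 supported at m = (x,y) with dim_k M/(m·M) = 2, and suppose m·M is isomorphic to k ⊕ k = (A/m)². Writing multiplication by x and y on a pair of A-generators as k-linear maps A_x, A_y : k² → m·M = k², two such pairs (A_x, A_y) and (B_x, B_y) give rise to isomorphic A-modules if and only if there exist H, K ∈ GL₂(k) such that H A_x K = B_x and H A_y K = B_y. -/

import Mathlib

open MvPolynomial

/-- The module determined by a pair of 2×2 matrices `Ax, Ay`: on a basis
`v (inl 0), v (inl 1)` (the `A`-generators) and `v (inr 0), v (inr 1)` (a basis of
`m·M ≅ k ⊕ k`), `x` and `y` map the generators into `⟨v (inr 0), v (inr 1)⟩` via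
`Ax`, `Ay` and annihilate `v (inr i)`. -/
def IsMatrixModule (k : Type) [Field k] (Ax Ay : Matrix (Fin 2) (Fin 2) k)
    (M : Type) [AddCommGroup M] [Module (MvPolynomial (Fin 2) k) M] [Module k M]
    [IsScalarTower k (MvPolynomial (Fin 2) k) M]
    (v : Module.Basis (Fin 2 ⊕ Fin 2) k M) : Prop :=
  (∀ j : Fin 2, (X 0 : MvPolynomial (Fin 2) k) • v (Sum.inl j) = ∑ i, Ax i j • v (Sum.inr i)) ∧
  (∀ j : Fin 2, (X 1 : MvPolynomial (Fin 2) k) • v (Sum.inl j) = ∑ i, Ay i j • v (Sum.inr i)) ∧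
  (∀ j : Fin 2, (X 0 : MvPolynomial (Fin 2) k) • v (Sum.inr j) = 0) ∧
  (∀ j : Fin 2, (X 1 : MvPolynomial (Fin 2) k) • v (Sum.inr j) = 0)

namespace MatrixModuleAux

variable {k : Type} [Field k]

lemma sum_smul_sum' {V : Type} [AddCommGroup V] [Module k V]
    (a : Fin 2 → k) (B : Matrix (Fin 2) (Fin 2) k) (u : Fin 2 → V) :
    ∑ i, a i • ∑ l, B l i • u l = ∑ l, (B.mulVec a) l • u l := by
  simp only [Finset.smul_sum, smul_smul]
  rw [Finset.sum_comm]
  simp [Matrix.mulVec, dotProduct, Finset.sum_smul, smul_smul, mul_comm, add_smul]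

lemma one_smul_sum' {V : Type} [AddCommGroup V] [Module k V] (u : Fin 2 → V) (j : Fin 2) :
    ∑ l, ((1 : Matrix (Fin 2) (Fin 2) k)) l j • u l = u j := by
  simp [Matrix.one_apply, ite_smul]

lemma coeff_eq' {V : Type} [AddCommGroup V] [Module k V]
    (w : Module.Basis (Fin 2 ⊕ Fin 2) k V) {c d : Fin 2 → k}
    (h : ∑ l, c l • w (Sum.inr l) = ∑ l, d l • w (Sum.inr l)) : c = d := by
  funext l
  have h2 := congrArg (fun z => w.repr z (Sum.inr l)) h
  fin_cases l <;> simpa [Finsupp.single_apply] using h2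

variable {M : Type} [AddCommGroup M] [Module (MvPolynomial (Fin 2) k) M] [Module k M]
    [IsScalarTower k (MvPolynomial (Fin 2) k) M]
    {N : Type} [AddCommGroup N] [Module (MvPolynomial (Fin 2) k) N] [Module k N]
    [IsScalarTower k (MvPolynomial (Fin 2) k) N]

lemma smul_eq_rep (v : Module.Basis (Fin 2 ⊕ Fin 2) k M) {p : MvPolynomial (Fin 2) k}
    {C : Matrix (Fin 2) (Fin 2) k}
    (hg : ∀ j, p • v (Sum.inl j) = ∑ i, C i j • v (Sum.inr i))
    (hk : ∀ j, p • v (Sum.inr j) = 0) (m : M) :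
    p • m = ∑ i, (C.mulVec fun j => v.repr m (Sum.inl j)) i • v (Sum.inr i) := by
  conv_lhs => rw [← v.sum_repr m]
  rw [Finset.smul_sum]
  have hc : ∀ s : Fin 2 ⊕ Fin 2, p • (v.repr m s • v s) = v.repr m s • (p • v s) :=
    fun s => smul_comm _ _ _
  simp only [hc]
  rw [Fintype.sum_sum_type]
  simp only [hg, hk, smul_zero, Finset.sum_const_zero, add_zero]
  exact sum_smul_sum' _ _ _

lemma smul_comb (v : Module.Basis (Fin 2 ⊕ Fin 2) k M) {p : MvPolynomial (Fin 2) k}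
    {CA : Matrix (Fin 2) (Fin 2) k}
    (hMg : ∀ j, p • v (Sum.inl j) = ∑ i, CA i j • v (Sum.inr i)) (a : Fin 2 → k) :
    p • (∑ l, a l • v (Sum.inl l)) = ∑ i, (CA.mulVec a) i • v (Sum.inr i) := by
  rw [Finset.smul_sum]
  have h1 : ∀ l, p • (a l • v (Sum.inl l)) = a l • ∑ i, CA i l • v (Sum.inr i) := fun l => by
    rw [smul_comm, hMg l]
  simp only [h1]
  exact sum_smul_sum' _ _ _

lemma comm_of_basis {f : M →ₗ[k] N} (p : MvPolynomial (Fin 2) k)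
    (v : Module.Basis (Fin 2 ⊕ Fin 2) k M)
    (h : ∀ s, f (p • v s) = p • f (v s)) (m : M) : f (p • m) = p • f m := by
  conv_lhs => rw [← v.sum_repr m]
  conv_rhs => rw [← v.sum_repr m]
  rw [Finset.smul_sum, map_sum, map_sum, Finset.smul_sum]
  refine Finset.sum_congr rfl fun s _ => ?_
  rw [smul_comm, map_smul, h, map_smul, smul_comm]

lemma poly_linear {f : M →ₗ[k] N}
    (h0 : ∀ m, f ((X 0 : MvPolynomial (Fin 2) k) • m) = (X 0 : MvPolynomial (Fin 2) k) • f m)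
    (h1 : ∀ m, f ((X 1 : MvPolynomial (Fin 2) k) • m) = (X 1 : MvPolynomial (Fin 2) k) • f m)
    (p : MvPolynomial (Fin 2) k) (m : M) : f (p • m) = p • f m := by
  induction p using MvPolynomial.induction_on generalizing m with
  | C a =>
      have hm : (C a : MvPolynomial (Fin 2) k) • m = a • m := by
        rw [← MvPolynomial.algebraMap_eq]; exact algebraMap_smul _ a m
      have hn : (C a : MvPolynomial (Fin 2) k) • f m = a • f m := by
        rw [← MvPolynomial.algebraMap_eq]; exact algebraMap_smul _ a (f m)
      rw [hm, hn, map_smul]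
  | add p q hp hq => rw [add_smul, map_add, hp, hq, add_smul]
  | mul_X p n hp =>
      have hX : ∀ m : M, f ((X n : MvPolynomial (Fin 2) k) • m)
          = ((X n : MvPolynomial (Fin 2) k)) • f m := by
        fin_cases n
        · exact h0
        · exact h1
      rw [mul_smul, hp, hX, ← mul_smul]

lemma comm_basis_aux (v : Module.Basis (Fin 2 ⊕ Fin 2) k M) (w : Module.Basis (Fin 2 ⊕ Fin 2) k N)
    (f : M →ₗ[k] N) (p : MvPolynomial (Fin 2) k) (CA CB G Hm : Matrix (Fin 2) (Fin 2) k)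
    (hfInl : ∀ j, f (v (Sum.inl j)) = ∑ i, G i j • w (Sum.inl i))
    (hfInr : ∀ j, f (v (Sum.inr j)) = ∑ i, Hm i j • w (Sum.inr i))
    (hMg : ∀ j, p • v (Sum.inl j) = ∑ i, CA i j • v (Sum.inr i))
    (hMk : ∀ j, p • v (Sum.inr j) = 0)
    (hNg : ∀ j, p • w (Sum.inl j) = ∑ i, CB i j • w (Sum.inr i))
    (hNk : ∀ j, p • w (Sum.inr j) = 0)
    (hrel : Hm * CA = CB * G) (m : M) : f (p • m) = p • f m := by
  refine comm_of_basis p v (fun s => ?_) m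
  cases s with
  | inl j =>
      rw [hMg j, map_sum]
      simp only [map_smul, hfInr]
      rw [sum_smul_sum', hfInl, Finset.smul_sum]
      have h1 : ∀ i, p • (G i j • w (Sum.inl i)) = G i j • ∑ l, CB l i • w (Sum.inr l) := by
        intro i; rw [smul_comm, hNg i]
      simp only [h1]
      rw [sum_smul_sum']
      have h2 : (Hm.mulVec fun i => CA i j) = (CB.mulVec fun i => G i j) := by
        funext l
        have h3 := congrFun (congrFun hrel l) j
        simpa [Matrix.mul_apply, Matrix.mulVec, dotProduct] using h3
      rw [h2]
  | inr j =>
      rw [hMk j, map_zero, hfInr, Finset.smul_sum]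
      have h1 : ∀ i, p • (Hm i j • w (Sum.inr i)) = (0 : N) := by
        intro i; rw [smul_comm, hNk i, smul_zero]
      simp only [h1, Finset.sum_const_zero]

lemma comp_basis_aux (v : Module.Basis (Fin 2 ⊕ Fin 2) k M) (w : Module.Basis (Fin 2 ⊕ Fin 2) k N)
    (f : M →ₗ[k] N) (g : N →ₗ[k] M) (G Hm G2 H2 : Matrix (Fin 2) (Fin 2) k)
    (hfInl : ∀ j, f (v (Sum.inl j)) = ∑ i, G i j • w (Sum.inl i))
    (hfInr : ∀ j, f (v (Sum.inr j)) = ∑ i, Hm i j • w (Sum.inr i))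
    (hgInl : ∀ j, g (w (Sum.inl j)) = ∑ i, G2 i j • v (Sum.inl i))
    (hgInr : ∀ j, g (w (Sum.inr j)) = ∑ i, H2 i j • v (Sum.inr i))
    (hG : G2 * G = 1) (hH : H2 * Hm = 1) (m : M) : g (f m) = m := by
  conv_rhs => rw [← v.sum_repr m]
  conv_lhs => rw [← v.sum_repr m]
  rw [map_sum, map_sum]
  refine Finset.sum_congr rfl fun s _ => ?_
  rw [map_smul, map_smul]
  congr 1
  cases s with
  | inl j =>
      rw [hfInl, map_sum]
      simp only [map_smul, hgInl]
      rw [sum_smul_sum']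
      have h2 : (G2.mulVec fun i => G i j) = fun l => (1 : Matrix (Fin 2) (Fin 2) k) l j := by
        funext l
        have h3 := congrFun (congrFun hG l) j
        simpa [Matrix.mul_apply, Matrix.mulVec, dotProduct] using h3
      simp only [h2]
      exact one_smul_sum' _ j
  | inr j =>
      rw [hfInr, map_sum]
      simp only [map_smul, hgInr]
      rw [sum_smul_sum']
      have h2 : (H2.mulVec fun i => Hm i j) = fun l => (1 : Matrix (Fin 2) (Fin 2) k) l j := by
        funext l
        have h3 := congrFun (congrFun hH l) j
        simpa [Matrix.mul_apply, Matrix.mulVec, dotProduct] using h3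
      simp only [h2]
      exact one_smul_sum' _ j

lemma backward_aux (Ax Ay Bx By : Matrix (Fin 2) (Fin 2) k)
    (v : Module.Basis (Fin 2 ⊕ Fin 2) k M) (w : Module.Basis (Fin 2 ⊕ Fin 2) k N)
    (hM : IsMatrixModule k Ax Ay M v) (hN : IsMatrixModule k Bx By N w)
    (H K : GL (Fin 2) k)
    (hx : (H : Matrix (Fin 2) (Fin 2) k) * Ax * (K : Matrix (Fin 2) (Fin 2) k) = Bx)
    (hy : (H : Matrix (Fin 2) (Fin 2) k) * Ay * (K : Matrix (Fin 2) (Fin 2) k) = By) :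
    Nonempty (M ≃ₗ[MvPolynomial (Fin 2) k] N) := by
  obtain ⟨hM1, hM2, hM3, hM4⟩ := hM
  obtain ⟨hN1, hN2, hN3, hN4⟩ := hN
  set Hm := (H : Matrix (Fin 2) (Fin 2) k) with hHm
  set Km := (K : Matrix (Fin 2) (Fin 2) k) with hKm
  set K' := ((K⁻¹ : GL (Fin 2) k) : Matrix (Fin 2) (Fin 2) k) with hK'
  set H' := ((H⁻¹ : GL (Fin 2) k) : Matrix (Fin 2) (Fin 2) k) with hH'
  have hKK' : Km * K' = 1 := Units.mul_inv K
  have hK'K : K' * Km = 1 := Units.inv_mul K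
  have hHH' : Hm * H' = 1 := Units.mul_inv H
  have hH'H : H' * Hm = 1 := Units.inv_mul H
  set f : M →ₗ[k] N := v.constr k (Sum.elim
    (fun j => ∑ i, K' i j • w (Sum.inl i)) (fun j => ∑ i, Hm i j • w (Sum.inr i))) with hf
  set g : N →ₗ[k] M := w.constr k (Sum.elim
    (fun j => ∑ i, Km i j • v (Sum.inl i)) (fun j => ∑ i, H' i j • v (Sum.inr i))) with hg
  have hfInl : ∀ j, f (v (Sum.inl j)) = ∑ i, K' i j • w (Sum.inl i) := fun j => by
    rw [hf, Module.Basis.constr_basis]; rfl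
  have hfInr : ∀ j, f (v (Sum.inr j)) = ∑ i, Hm i j • w (Sum.inr i) := fun j => by
    rw [hf, Module.Basis.constr_basis]; rfl
  have hgInl : ∀ j, g (w (Sum.inl j)) = ∑ i, Km i j • v (Sum.inl i) := fun j => by
    rw [hg, Module.Basis.constr_basis]; rfl
  have hgInr : ∀ j, g (w (Sum.inr j)) = ∑ i, H' i j • v (Sum.inr i) := fun j => by
    rw [hg, Module.Basis.constr_basis]; rfl
  have hBxK : Hm * Ax = Bx * K' := by
    rw [← hx, Matrix.mul_assoc (Hm * Ax) Km K', hKK', Matrix.mul_one]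
  have hByK : Hm * Ay = By * K' := by
    rw [← hy, Matrix.mul_assoc (Hm * Ay) Km K', hKK', Matrix.mul_one]
  have h0 : ∀ m, f ((X 0 : MvPolynomial (Fin 2) k) • m) = (X 0 : MvPolynomial (Fin 2) k) • f m :=
    comm_basis_aux v w f _ Ax Bx K' Hm hfInl hfInr hM1 hM3 hN1 hN3 hBxK
  have h1 : ∀ m, f ((X 1 : MvPolynomial (Fin 2) k) • m) = (X 1 : MvPolynomial (Fin 2) k) • f m :=
    comm_basis_aux v w f _ Ay By K' Hm hfInl hfInr hM2 hM4 hN2 hN4 hByK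
  have hgf : ∀ m, g (f m) = m :=
    comp_basis_aux v w f g K' Hm Km H' hfInl hfInr hgInl hgInr hKK' hH'H
  have hfg : ∀ n, f (g n) = n :=
    comp_basis_aux w v g f Km H' K' Hm hgInl hgInr hfInl hfInr hK'K hHH'
  refine ⟨{ toFun := f, map_add' := map_add f,
            map_smul' := fun p m => poly_linear h0 h1 p m,
            invFun := g, left_inv := hgf, right_inv := hfg }⟩

lemma forward_aux (Ax Ay Bx By : Matrix (Fin 2) (Fin 2) k)
    (hA : (Matrix.fromCols Ax Ay).rank = 2)
    (v : Module.Basis (Fin 2 ⊕ Fin 2) k M) (w : Module.Basis (Fin 2 ⊕ Fin 2) k N)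
    (hM : IsMatrixModule k Ax Ay M v) (hN : IsMatrixModule k Bx By N w)
    (e : M ≃ₗ[MvPolynomial (Fin 2) k] N) :
    ∃ H K : GL (Fin 2) k,
        (H : Matrix (Fin 2) (Fin 2) k) * Ax * (K : Matrix (Fin 2) (Fin 2) k) = Bx ∧
        (H : Matrix (Fin 2) (Fin 2) k) * Ay * (K : Matrix (Fin 2) (Fin 2) k) = By := by
  obtain ⟨hM1, hM2, hM3, hM4⟩ := hM
  obtain ⟨hN1, hN2, hN3, hN4⟩ := hN
  set ek : M →ₗ[k] N := ((e.restrictScalars k : M ≃ₗ[k] N) : M →ₗ[k] N) with hek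
  set ek' : N →ₗ[k] M := ((e.symm.restrictScalars k : N ≃ₗ[k] M) : N →ₗ[k] M) with hek'
  have hekA : ∀ (p : MvPolynomial (Fin 2) k) (m : M), ek (p • m) = p • ek m := fun p m =>
    map_smul e p m
  have hsurj : Function.Surjective (Matrix.fromCols Ax Ay).mulVecLin := by
    rw [← LinearMap.range_eq_top]
    apply Submodule.eq_top_of_finrank_eq
    have hA' : Module.finrank k
        (LinearMap.range (Matrix.fromCols Ax Ay).mulVecLin) = 2 := hA
    rw [hA']
    simp
  have hrepr0 : ∀ j l, w.repr (ek (v (Sum.inr j))) (Sum.inl l) = 0 := by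
    intro j l
    obtain ⟨u, hu⟩ := hsurj (Pi.single j 1)
    have hu2 : Ax.mulVec (u ∘ Sum.inl) + Ay.mulVec (u ∘ Sum.inr) = Pi.single j 1 := by
      have h2 : u = Sum.elim (u ∘ Sum.inl) (u ∘ Sum.inr) := by funext s; cases s <;> rfl
      rw [← Matrix.fromCols_mulVec_sumElim, ← h2, ← Matrix.mulVecLin_apply, hu]
    have h3 : (X 0 : MvPolynomial (Fin 2) k) • (∑ l, (u ∘ Sum.inl) l • v (Sum.inl l))
        + (X 1 : MvPolynomial (Fin 2) k) • (∑ l, (u ∘ Sum.inr) l • v (Sum.inl l))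
        = v (Sum.inr j) := by
      rw [smul_comb v hM1 (u ∘ Sum.inl), smul_comb v hM2 (u ∘ Sum.inr),
        ← Finset.sum_add_distrib]
      have h4 : ∀ i, (Ax.mulVec (u ∘ Sum.inl)) i • v (Sum.inr i)
          + (Ay.mulVec (u ∘ Sum.inr)) i • v (Sum.inr i)
          = (Pi.single j 1 : Fin 2 → k) i • v (Sum.inr i) := by
        intro i; rw [← add_smul]; congr 1; exact congrFun hu2 i
      simp only [h4]
      simp [Pi.single_apply, ite_smul]
    have h5 : ek (v (Sum.inr j))
        = (X 0 : MvPolynomial (Fin 2) k) • ek (∑ l, (u ∘ Sum.inl) l • v (Sum.inl l))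
        + (X 1 : MvPolynomial (Fin 2) k) • ek (∑ l, (u ∘ Sum.inr) l • v (Sum.inl l)) := by
      rw [← hekA, ← hekA, ← map_add, h3]
    rw [h5, smul_eq_rep w hN1 hN3, smul_eq_rep w hN2 hN4]
    simp [Finsupp.single_apply]
  set P := LinearMap.toMatrix v w ek with hP
  set Q : Matrix (Fin 2) (Fin 2) k := Matrix.of fun i j => P (Sum.inl i) (Sum.inl j) with hQ
  set R : Matrix (Fin 2) (Fin 2) k := Matrix.of fun i j => P (Sum.inr i) (Sum.inl j) with hR
  set Hm : Matrix (Fin 2) (Fin 2) k := Matrix.of fun i j => P (Sum.inr i) (Sum.inr j) with hHmm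
  have hblock : P = Matrix.fromBlocks Q 0 R Hm := by
    ext s t
    cases s <;> cases t <;>
      simp [hQ, hR, hHmm, hP, LinearMap.toMatrix_apply, hrepr0]
  have hcomp1 : ek.comp ek' = LinearMap.id := by
    ext n; simp [hek, hek']
  have hcomp2 : ek'.comp ek = LinearMap.id := by
    ext m; simp [hek, hek']
  have h1 : P * LinearMap.toMatrix w v ek' = 1 := by
    rw [hP, ← LinearMap.toMatrix_comp w v w ek ek', hcomp1, LinearMap.toMatrix_id]
  have h2 : LinearMap.toMatrix w v ek' * P = 1 := by
    rw [hP, ← LinearMap.toMatrix_comp v w v ek' ek, hcomp2, LinearMap.toMatrix_id]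
  have hPdet : IsUnit P.det := by
    have hPu : IsUnit P := ⟨⟨P, LinearMap.toMatrix w v ek', h1, h2⟩, rfl⟩
    exact (Matrix.isUnit_iff_isUnit_det P).mp hPu
  have hdetQH : P.det = Q.det * Hm.det := by
    rw [hblock]; exact Matrix.det_fromBlocks_zero₁₂ _ _ _
  have hne : Q.det * Hm.det ≠ 0 := hdetQH ▸ hPdet.ne_zero
  have hQu : IsUnit Q.det := isUnit_iff_ne_zero.mpr (left_ne_zero_of_mul hne)
  have hHu : IsUnit Hm.det := isUnit_iff_ne_zero.mpr (right_ne_zero_of_mul hne)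
  have hInr : ∀ j, ek (v (Sum.inr j)) = ∑ i, Hm i j • w (Sum.inr i) := by
    intro j
    conv_lhs => rw [← w.sum_repr (ek (v (Sum.inr j)))]
    rw [Fintype.sum_sum_type]
    simp only [hrepr0 j, zero_smul, Finset.sum_const_zero, zero_add]
    refine Finset.sum_congr rfl fun i _ => ?_
    congr 1
    simp [hHmm, hP, LinearMap.toMatrix_apply]
  have hInl : ∀ j, ek (v (Sum.inl j))
      = (∑ i, Q i j • w (Sum.inl i)) + ∑ i, R i j • w (Sum.inr i) := by
    intro j
    conv_lhs => rw [← w.sum_repr (ek (v (Sum.inl j)))]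
    rw [Fintype.sum_sum_type]
    congr 1 <;>
      · refine Finset.sum_congr rfl fun i _ => ?_
        congr 1
        simp [hQ, hR, hP, LinearMap.toMatrix_apply]
  have key : ∀ (p : MvPolynomial (Fin 2) k) (CA CB : Matrix (Fin 2) (Fin 2) k),
      (∀ j, p • v (Sum.inl j) = ∑ i, CA i j • v (Sum.inr i)) →
      (∀ j, p • w (Sum.inl j) = ∑ i, CB i j • w (Sum.inr i)) →
      (∀ j, p • w (Sum.inr j) = 0) → Hm * CA = CB * Q := by
    intro p CA CB hMg hNg hNk
    have hcol : ∀ j, (Hm.mulVec fun i => CA i j) = (CB.mulVec fun i => Q i j) := by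
      intro j
      apply coeff_eq' w
      calc ∑ l, (Hm.mulVec fun i => CA i j) l • w (Sum.inr l)
          = ∑ i, CA i j • ∑ l, Hm l i • w (Sum.inr l) := (sum_smul_sum' _ _ _).symm
        _ = ∑ i, CA i j • ek (v (Sum.inr i)) := by simp only [hInr]
        _ = ek (p • v (Sum.inl j)) := by rw [hMg j, map_sum]; simp only [map_smul]
        _ = p • ek (v (Sum.inl j)) := hekA p _
        _ = ∑ i, Q i j • (p • w (Sum.inl i)) + ∑ i, R i j • (p • w (Sum.inr i)) := by
            rw [hInl j, smul_add, Finset.smul_sum, Finset.smul_sum]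
            congr 1 <;> exact Finset.sum_congr rfl fun i _ => smul_comm _ _ _
        _ = ∑ i, Q i j • ∑ l, CB l i • w (Sum.inr l) := by
            simp only [hNg, hNk, smul_zero, Finset.sum_const_zero, add_zero]
        _ = ∑ l, (CB.mulVec fun i => Q i j) l • w (Sum.inr l) := sum_smul_sum' _ _ _
    ext l j
    have h6 := congrFun (hcol j) l
    simpa [Matrix.mul_apply, Matrix.mulVec, dotProduct] using h6
  have hxrel : Hm * Ax = Bx * Q := key _ Ax Bx hM1 hN1 hN3
  have hyrel : Hm * Ay = By * Q := key _ Ay By hM2 hN2 hN4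
  refine ⟨⟨Hm, Hm⁻¹, Matrix.mul_nonsing_inv _ hHu, Matrix.nonsing_inv_mul _ hHu⟩,
          ⟨Q⁻¹, Q, Matrix.nonsing_inv_mul _ hQu, Matrix.mul_nonsing_inv _ hQu⟩, ?_, ?_⟩
  · show Hm * Ax * Q⁻¹ = Bx
    rw [hxrel, Matrix.mul_assoc, Matrix.mul_nonsing_inv _ hQu, Matrix.mul_one]
  · show Hm * Ay * Q⁻¹ = By
    rw [hyrel, Matrix.mul_assoc, Matrix.mul_nonsing_inv _ hQu, Matrix.mul_one]

end MatrixModuleAux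

/-- For length-4 modules `M` with `dim_k M/(m·M) = 2` and `m·M ≅ k ⊕ k`,
described by pairs of 2×2 matrices `(A_x, A_y)` with `rk (A_x | A_y) = 2`, two pairs
`(A_x, A_y)` and `(B_x, B_y)` give isomorphic `A`-modules if and only if there are
`H, K ∈ GL₂(k)` with `H A_x K = B_x` and `H A_y K = B_y`. -/
theorem matrixModule_iso_iff_GL2_equiv (k : Type) [Field k] [IsAlgClosed k] [CharZero k]
    (Ax Ay Bx By : Matrix (Fin 2) (Fin 2) k)
    (hA : (Matrix.fromCols Ax Ay).rank = 2)
    (hB : (Matrix.fromCols Bx By).rank = 2)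
    (M : Type) [AddCommGroup M] [Module (MvPolynomial (Fin 2) k) M] [Module k M]
    [IsScalarTower k (MvPolynomial (Fin 2) k) M]
    (N : Type) [AddCommGroup N] [Module (MvPolynomial (Fin 2) k) N] [Module k N]
    [IsScalarTower k (MvPolynomial (Fin 2) k) N]
    (v : Module.Basis (Fin 2 ⊕ Fin 2) k M) (w : Module.Basis (Fin 2 ⊕ Fin 2) k N)
    (hM : IsMatrixModule k Ax Ay M v) (hN : IsMatrixModule k Bx By N w) :
    Nonempty (M ≃ₗ[MvPolynomial (Fin 2) k] N) ↔
      ∃ H K : GL (Fin 2) k,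
        (H : Matrix (Fin 2) (Fin 2) k) * Ax * (K : Matrix (Fin 2) (Fin 2) k) = Bx ∧
        (H : Matrix (Fin 2) (Fin 2) k) * Ay * (K : Matrix (Fin 2) (Fin 2) k) = By := by
  constructor
  · rintro ⟨e⟩
    exact MatrixModuleAux.forward_aux Ax Ay Bx By hA v w hM hN e
  · rintro ⟨H, K, hx, hy⟩
    exact MatrixModuleAux.backward_aux Ax Ay Bx By v w hM hN H K hx hy
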